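/- The operators θ̃_i := π̃_i − 1 satisfy θ̃_i² = −θ̃_i, θ̃_i θ̃_j = θ̃_j θ̃_i for |i−j| > 1, and the braid relations θ̃_i θ̃_{i+1} θ̃_i = θ̃_{i+1} θ̃_i θ̃_{i+1}. -/

import Mathlib

open MvPolynomial Finset

/-- Hivert's quasisymmetric swap on exponent vectors: exchange the exponents in
positions `i` and `i+1` if one of them is zero, otherwise do nothing. -/
noncomputable def tswapE (n i : ℕ) (hi : i + 1 < n) (β : Fin n →₀ ℕ) : Fin n →₀ ℕ :=
  if β ⟨i, by omega⟩ = 0 ∨ β ⟨i + 1, hi⟩ = 0 then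
    β.equivMapDomain (Equiv.swap (⟨i, by omega⟩ : Fin n) ⟨i + 1, hi⟩)
  else β

/-- Hivert's quasisymmetric action `s̃ᵢ` on polynomials, acting monomial-wise by
`s̃ᵢ(x^β) = x^(s̃ᵢ β)` and extended linearly. -/
noncomputable def stilde (n i : ℕ) (hi : i + 1 < n) (f : MvPolynomial (Fin n) ℂ) :
    MvPolynomial (Fin n) ℂ :=
  f.support.sum fun β => monomial (tswapE n i hi β) (coeff β f)

/-- `PRel n i hi f g` encodes `π̃ᵢ f = g`, where
`π̃ᵢ f = (xᵢ f - s̃ᵢ(xᵢ f))/(xᵢ - xᵢ₊₁)`; the relation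
`(xᵢ - xᵢ₊₁) * g = xᵢ f - s̃ᵢ(xᵢ f)` determines `g` uniquely.
Then `θ̃ᵢ f = g - f` (i.e. `θ̃ᵢ = π̃ᵢ - id`). -/
def PRel (n i : ℕ) (hi : i + 1 < n) (f g : MvPolynomial (Fin n) ℂ) : Prop :=
  (X ⟨i, by omega⟩ - X ⟨i + 1, hi⟩) * g
    = X ⟨i, by omega⟩ * f - stilde n i hi (X ⟨i, by omega⟩ * f)



section aux
variable {n : ℕ}

lemma U_apply (β : Fin n →₀ ℕ) (u : Fin n) (p : ℕ) (x : Fin n) :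
    (Finsupp.update β u p) x = if x = u then p else β x := by
  classical
  rw [Finsupp.coe_update, Function.update_apply]

noncomputable def ptMon (u v : Fin n) (β : Fin n →₀ ℕ) (c : ℂ) : MvPolynomial (Fin n) ℂ :=
  if β v = 0 then
    ∑ k ∈ Finset.range (β u + 1),
      monomial (Finsupp.update (Finsupp.update β u (β u - k)) v k) c
  else 0

noncomputable def pt (u v : Fin n) (f : MvPolynomial (Fin n) ℂ) : MvPolynomial (Fin n) ℂ :=
  Finsupp.sum (AddMonoidAlgebra.coeff f) (ptMon u v)

lemma ptMon_zero (u v : Fin n) (β : Fin n →₀ ℕ) : ptMon u v β 0 = 0 := by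
  unfold ptMon; split <;> simp

lemma ptMon_add (u v : Fin n) (β : Fin n →₀ ℕ) (c d : ℂ) :
    ptMon u v β (c + d) = ptMon u v β c + ptMon u v β d := by
  unfold ptMon; split <;> simp [Finset.sum_add_distrib]

lemma ptMon_sub (u v : Fin n) (β : Fin n →₀ ℕ) (c d : ℂ) :
    ptMon u v β (c - d) = ptMon u v β c - ptMon u v β d := by
  unfold ptMon; split <;> simp [Finset.sum_sub_distrib]

lemma pt_zero (u v : Fin n) : pt u v 0 = 0 := by
  simp [pt]

lemma pt_monomial (u v : Fin n) (β : Fin n →₀ ℕ) (c : ℂ) :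
    pt u v (monomial β c) = ptMon u v β c := by
  rw [pt, ← single_eq_monomial, AddMonoidAlgebra.coeff_single]
  exact Finsupp.sum_single_index (ptMon_zero u v β)

lemma pt_add (u v : Fin n) (f g : MvPolynomial (Fin n) ℂ) :
    pt u v (f + g) = pt u v f + pt u v g := by
  rw [pt, pt, pt, AddMonoidAlgebra.coeff_add]
  exact Finsupp.sum_add_index' (ptMon_zero u v) (ptMon_add u v)

lemma pt_sub (u v : Fin n) (f g : MvPolynomial (Fin n) ℂ) :
    pt u v (f - g) = pt u v f - pt u v g := by
  rw [pt, pt, pt, AddMonoidAlgebra.coeff_sub]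
  exact Finsupp.sum_sub_index (fun β c d => ptMon_sub u v β c d)

lemma pt_sum {α : Type*} (u v : Fin n) (s : Finset α) (F : α → MvPolynomial (Fin n) ℂ) :
    pt u v (∑ x ∈ s, F x) = ∑ x ∈ s, pt u v (F x) := by
  classical
  induction s using Finset.cons_induction with
  | empty => simp [pt_zero]
  | cons a s ha ih => rw [Finset.sum_cons, Finset.sum_cons, pt_add, ih]

lemma ptMon_of_ne (u v : Fin n) (β : Fin n →₀ ℕ) (c : ℂ) (h : β v ≠ 0) :
    ptMon u v β c = 0 := by
  rw [ptMon, if_neg h]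

lemma ptMon_of_eq (u v : Fin n) (β : Fin n →₀ ℕ) (c : ℂ) (h : β v = 0) :
    ptMon u v β c = ∑ k ∈ Finset.range (β u + 1),
      monomial (Finsupp.update (Finsupp.update β u (β u - k)) v k) c := by
  rw [ptMon, if_pos h]

lemma UU_u {u v : Fin n} (huv : u ≠ v) (β : Fin n →₀ ℕ) (p q : ℕ) :
    (Finsupp.update (Finsupp.update β u p) v q) u = p := by
  simp [U_apply, huv]

lemma UU_v {u v : Fin n} (β : Fin n →₀ ℕ) (p q : ℕ) :
    (Finsupp.update (Finsupp.update β u p) v q) v = q := by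
  simp [U_apply]

lemma UU_other {u v x : Fin n} (hxu : x ≠ u) (hxv : x ≠ v) (β : Fin n →₀ ℕ) (p q : ℕ) :
    (Finsupp.update (Finsupp.update β u p) v q) x = β x := by
  simp [U_apply, hxu, hxv]

lemma UU_self {u v : Fin n} (β : Fin n →₀ ℕ) :
    Finsupp.update (Finsupp.update β u (β u)) v (β v) = β := by
  ext x
  simp only [U_apply]
  split_ifs <;> simp_all

lemma pt_idem {u v : Fin n} (huv : u ≠ v) (f : MvPolynomial (Fin n) ℂ) :
    pt u v (pt u v f) = pt u v f := by
  induction f using MvPolynomial.induction_on' with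
  | monomial β c =>
    rw [pt_monomial]
    by_cases hb : β v = 0
    · conv_lhs => rw [ptMon_of_eq u v β c hb]
      rw [pt_sum]
      rw [Finset.sum_eq_single_of_mem 0 (Finset.mem_range.mpr (by omega))
        (fun k _ hk0 => by
          rw [pt_monomial, ptMon_of_ne u v _ c (by rw [UU_v]; exact hk0)])]
      have h0 : Finsupp.update (Finsupp.update β u (β u - 0)) v 0 = β := by
        rw [Nat.sub_zero]; conv_lhs => rw [← hb]
        exact UU_self β
      rw [h0, pt_monomial]
    · rw [ptMon_of_ne u v β c hb, pt_zero]
  | add p q hp hq => rw [pt_add, pt_add, hp, hq]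

lemma pt_comm {u v u' v' : Fin n} (h1 : u ≠ u') (h2 : u ≠ v') (h3 : v ≠ u') (h4 : v ≠ v')
    (huv : u ≠ v) (huv' : u' ≠ v') (f : MvPolynomial (Fin n) ℂ) :
    pt u v (pt u' v' f) = pt u' v' (pt u v f) := by
  induction f using MvPolynomial.induction_on' with
  | monomial β c =>
    rw [pt_monomial, pt_monomial]
    by_cases hb : β v = 0 <;> by_cases hb' : β v' = 0
    · -- both zero
      rw [ptMon_of_eq u' v' β c hb', ptMon_of_eq u v β c hb, pt_sum, pt_sum]
      have L : ∀ l, pt u v (monomial ((β.update u' (β u' - l)).update v' l) c)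
          = ∑ k ∈ Finset.range (β u + 1),
              monomial ((((β.update u' (β u' - l)).update v' l).update u (β u - k)).update v k)
                c := by
        intro l
        rw [pt_monomial, ptMon_of_eq u v _ c (by rw [UU_other h3 h4]; exact hb),
          UU_other h1 h2]
      have R : ∀ k, pt u' v' (monomial ((β.update u (β u - k)).update v k) c)
          = ∑ l ∈ Finset.range (β u' + 1),
              monomial ((((β.update u (β u - k)).update v k).update u' (β u' - l)).update v' l)
                c := by
        intro k
        rw [pt_monomial, ptMon_of_eq u' v' _ c (by rw [UU_other h2.symm h4.symm]; exact hb'),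
          UU_other h1.symm h3.symm]
      simp only [L, R]
      rw [Finset.sum_comm]
      apply Finset.sum_congr rfl
      intro k _
      apply Finset.sum_congr rfl
      intro l _
      have hβ : (((β.update u' (β u' - l)).update v' l).update u (β u - k)).update v k
          = (((β.update u (β u - k)).update v k).update u' (β u' - l)).update v' l := by
        ext x
        simp only [U_apply]
        split_ifs <;> simp_all
      rw [hβ]
    · rw [ptMon_of_ne u' v' β c hb', pt_zero, ptMon_of_eq u v β c hb, pt_sum]
      symm
      apply Finset.sum_eq_zero
      intro k hk
      rw [pt_monomial, ptMon_of_ne u' v' _ c (by rw [UU_other h2.symm h4.symm]; exact hb')]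
    · rw [ptMon_of_ne u v β c hb, pt_zero, ptMon_of_eq u' v' β c hb', pt_sum]
      apply Finset.sum_eq_zero
      intro k hk
      rw [pt_monomial, ptMon_of_ne u v _ c (by rw [UU_other h3 h4]; exact hb)]
    · rw [ptMon_of_ne u v β c hb, ptMon_of_ne u' v' β c hb', pt_zero, pt_zero]
  | add p q hp hq => rw [pt_add, pt_add, pt_add, pt_add, hp, hq]


lemma tri {M : Type*} [AddCommMonoid M] (a : ℕ) (g : ℕ → ℕ → ℕ → M) :
    ∑ k ∈ Finset.range (a + 1), ∑ j ∈ Finset.range (a - k + 1), g (a - k - j) j k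
      = ∑ k ∈ Finset.range (a + 1), ∑ l ∈ Finset.range (k + 1), g (a - k) (k - l) l := by
  rw [Finset.sum_sigma', Finset.sum_sigma']
  refine Finset.sum_nbij' (fun p => ⟨p.1 + p.2, p.1⟩) (fun p => ⟨p.2, p.1 - p.2⟩) ?_ ?_ ?_ ?_ ?_
  · rintro ⟨k, j⟩ hp
    simp only [Finset.mem_sigma, Finset.mem_range] at *
    omega
  · rintro ⟨k, l⟩ hp
    simp only [Finset.mem_sigma, Finset.mem_range] at *
    omega
  · rintro ⟨k, j⟩ hp
    simp only [Finset.mem_sigma, Finset.mem_range] at hp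
    have : k + j - k = j := by omega
    simp [this]
  · rintro ⟨k, l⟩ hp
    simp only [Finset.mem_sigma, Finset.mem_range] at hp
    have : l + (k - l) = k := by omega
    simp [this]
  · rintro ⟨k, j⟩ hp
    simp only [Finset.mem_sigma, Finset.mem_range] at hp
    have h1 : a - (k + j) = a - k - j := by omega
    have h2 : k + j - k = j := by omega
    rw [h1, h2]

lemma pt_braid {u v w : Fin n} (huv : u ≠ v) (hvw : v ≠ w) (huw : u ≠ w)
    (f : MvPolynomial (Fin n) ℂ) :
    pt u v (pt v w (pt u v f)) = pt v w (pt u v (pt v w f)) := by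
  induction f using MvPolynomial.induction_on' with
  | monomial β c =>
    rw [pt_monomial, pt_monomial]
    by_cases hb : β v = 0 <;> by_cases hc : β w = 0
    · -- main case : β v = 0, β w = 0
      have stepL1 : ∀ k, pt v w (monomial ((β.update u (β u - k)).update v k) c)
          = ∑ l ∈ Finset.range (k + 1),
              monomial ((((β.update u (β u - k)).update v k).update v (k - l)).update w l)
                c := by
        intro k
        rw [pt_monomial,
          ptMon_of_eq v w _ c (by rw [UU_other huw.symm hvw.symm]; exact hc), UU_v]
      have stepL2 : ∀ k ∈ Finset.range (β u + 1),
          (∑ l ∈ Finset.range (k + 1), pt u v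
            (monomial ((((β.update u (β u - k)).update v k).update v (k - l)).update w l) c))
          = ∑ j ∈ Finset.range (β u - k + 1),
              monomial (((β.update u (β u - k - j)).update v j).update w k) c := by
        intro k hk
        rw [Finset.sum_eq_single_of_mem k (Finset.mem_range.mpr (by omega))
          (fun l hl hlk => by
            rw [pt_monomial]
            apply ptMon_of_ne
            have hv : ((((β.update u (β u - k)).update v k).update v (k - l)).update w l) v
                = k - l := by simp [U_apply, hvw]
            rw [hv]
            simp only [Finset.mem_range] at hl
            omega)]
        rw [pt_monomial, ptMon_of_eq u v _ c (by simp [U_apply, hvw])]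
        have hu : ((((β.update u (β u - k)).update v k).update v (k - k)).update w k) u
            = β u - k := by simp [U_apply, huv, huw]
        rw [hu]
        apply Finset.sum_congr rfl
        intro j hj
        have hE : ((((((β.update u (β u - k)).update v k).update v (k - k)).update w
              k).update u (β u - k - j)).update v j)
            = ((β.update u (β u - k - j)).update v j).update w k := by
          ext x
          simp only [U_apply]
          split_ifs <;> simp_all
        rw [hE]
      have HL : pt u v (pt v w (ptMon u v β c))
          = ∑ k ∈ Finset.range (β u + 1), ∑ j ∈ Finset.range (β u - k + 1),
              monomial (((β.update u (β u - k - j)).update v j).update w k) c := by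
        rw [ptMon_of_eq u v β c hb, pt_sum]
        simp only [stepL1]
        rw [pt_sum]
        apply Finset.sum_congr rfl
        intro k hk
        rw [pt_sum]
        exact stepL2 k hk
      have hβ0 : (β.update v (0 - 0)).update w 0 = β := by
        ext x
        simp only [U_apply]
        split_ifs <;> simp_all
      have HR : pt v w (pt u v (ptMon v w β c))
          = ∑ k ∈ Finset.range (β u + 1), ∑ l ∈ Finset.range (k + 1),
              monomial (((β.update u (β u - k)).update v (k - l)).update w l) c := by
        rw [ptMon_of_eq v w β c hc, hb, Finset.sum_range_one, hβ0, pt_monomial,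
          ptMon_of_eq u v β c hb, pt_sum]
        apply Finset.sum_congr rfl
        intro k hk
        rw [stepL1 k]
        apply Finset.sum_congr rfl
        intro l hl
        have hE : (((β.update u (β u - k)).update v k).update v (k - l)).update w l
            = ((β.update u (β u - k)).update v (k - l)).update w l := by
          ext x
          simp only [U_apply]
          split_ifs <;> simp_all
        rw [hE]
      rw [HL, HR]
      exact tri (β u) (fun x y z => monomial (((β.update u x).update v y).update w z) c)
    · -- β v = 0, β w ≠ 0
      rw [ptMon_of_ne v w β c hc, pt_zero, pt_zero, ptMon_of_eq u v β c hb, pt_sum]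
      rw [Finset.sum_eq_zero (fun k _ => by
        rw [pt_monomial]
        exact ptMon_of_ne v w _ c (by rw [UU_other huw.symm hvw.symm]; exact hc)), pt_zero]
    · -- β v ≠ 0, β w = 0
      rw [ptMon_of_ne u v β c hb, pt_zero, pt_zero, ptMon_of_eq v w β c hc, pt_sum]
      rw [Finset.sum_eq_single_of_mem (β v) (Finset.mem_range.mpr (by omega))
        (fun l hl hlb => by
          rw [pt_monomial]
          apply ptMon_of_ne
          have hv : ((β.update v (β v - l)).update w l) v = β v - l := by
            simp [U_apply, hvw]
          rw [hv]
          simp only [Finset.mem_range] at hl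
          omega)]
      rw [pt_monomial, ptMon_of_eq u v _ c (by simp [U_apply, hvw])]
      have hu : ((β.update v (β v - β v)).update w (β v)) u = β u := by
        simp [U_apply, huv, huw]
      rw [hu, pt_sum]
      rw [Finset.sum_eq_zero (fun k _ => by
        rw [pt_monomial]
        apply ptMon_of_ne v w _ c
        have hw : (((((β.update v (β v - β v)).update w (β v)).update u
            (β u - k)).update v k)) w = β v := by
          simp [U_apply, hvw, huw, (Ne.symm huw), (Ne.symm hvw)]
        rw [hw]
        exact hb)]
    · rw [ptMon_of_ne u v β c hb, ptMon_of_ne v w β c hc, pt_zero, pt_zero, pt_zero]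
  | add p q hp hq =>
    rw [pt_add, pt_add, pt_add, pt_add, pt_add, pt_add, hp, hq]

lemma swap_upd {u v : Fin n} (huv : u ≠ v) (β : Fin n →₀ ℕ) :
    β.equivMapDomain (Equiv.swap u v) = (β.update u (β v)).update v (β u) := by
  ext x
  rw [Finsupp.equivMapDomain_apply, Equiv.symm_swap, Equiv.swap_apply_def]
  simp only [U_apply]
  split_ifs <;> simp_all

lemma tswapE_eq (n i : ℕ) (hi : i + 1 < n) (β : Fin n →₀ ℕ)
    (h : β ⟨i, by omega⟩ = 0 ∨ β ⟨i + 1, hi⟩ = 0) :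
    tswapE n i hi β
      = (β.update ⟨i, by omega⟩ (β ⟨i + 1, hi⟩)).update ⟨i + 1, hi⟩ (β ⟨i, by omega⟩) := by
  unfold tswapE
  rw [if_pos h]
  exact swap_upd (by simp [Fin.ext_iff]) β

lemma tswapE_eq_self (n i : ℕ) (hi : i + 1 < n) (β : Fin n →₀ ℕ)
    (h : ¬(β ⟨i, by omega⟩ = 0 ∨ β ⟨i + 1, hi⟩ = 0)) :
    tswapE n i hi β = β := by
  unfold tswapE
  rw [if_neg h]

lemma stilde_eq_sum (n i : ℕ) (hi : i + 1 < n) (f : MvPolynomial (Fin n) ℂ) :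
    stilde n i hi f = Finsupp.sum (AddMonoidAlgebra.coeff f) fun β c => monomial (tswapE n i hi β) c := rfl

lemma stilde_add (n i : ℕ) (hi : i + 1 < n) (f g : MvPolynomial (Fin n) ℂ) :
    stilde n i hi (f + g) = stilde n i hi f + stilde n i hi g := by
  rw [stilde_eq_sum, stilde_eq_sum, stilde_eq_sum, AddMonoidAlgebra.coeff_add]
  exact Finsupp.sum_add_index' (fun β => by simp) (fun β c d => by
    rw [← map_add])

lemma stilde_monomial (n i : ℕ) (hi : i + 1 < n) (β : Fin n →₀ ℕ) (c : ℂ) :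
    stilde n i hi (monomial β c) = monomial (tswapE n i hi β) c := by
  rw [stilde_eq_sum,
    ← single_eq_monomial, AddMonoidAlgebra.coeff_single]
  exact Finsupp.sum_single_index (by simp)

lemma prel_pt (n i : ℕ) (hi : i + 1 < n) (f : MvPolynomial (Fin n) ℂ) :
    PRel n i hi f (pt ⟨i, by omega⟩ ⟨i + 1, hi⟩ f) := by
  have huv : (⟨i, by omega⟩ : Fin n) ≠ ⟨i + 1, hi⟩ := by simp [Fin.ext_iff]
  unfold PRel
  induction f using MvPolynomial.induction_on' with
  | monomial β c =>
    set u : Fin n := ⟨i, by omega⟩ with hu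
    set v : Fin n := ⟨i + 1, hi⟩ with hv
    have hXm : monomial (Finsupp.single u 1 + β) c = X u * monomial β c := by
      rw [monomial_single_add, pow_one]
    rw [pt_monomial, ← hXm, stilde_monomial]
    have hβ'u : (Finsupp.single u 1 + β : Fin n →₀ ℕ) u = 1 + β u := by
      rw [Finsupp.add_apply, Finsupp.single_eq_same]
    have hβ'v : (Finsupp.single u 1 + β : Fin n →₀ ℕ) v = β v := by
      rw [Finsupp.add_apply, Finsupp.single_eq_of_ne huv.symm, zero_add]
    by_cases hb : β v = 0
    · rw [tswapE_eq n i hi _ (Or.inr (by rw [hβ'v]; exact hb))]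
      rw [ptMon_of_eq u v β c hb]
      rw [sub_mul, Finset.mul_sum, Finset.mul_sum, ← Finset.sum_sub_distrib]
      have tele : ∀ k ∈ Finset.range (β u + 1),
          (X u * monomial ((β.update u (β u - k)).update v k) c
            - X v * monomial ((β.update u (β u - k)).update v k) c)
          = monomial ((β.update u (β u + 1 - k)).update v k) c
            - monomial ((β.update u (β u + 1 - (k + 1))).update v (k + 1)) c := by
        intro k hk
        simp only [Finset.mem_range] at hk
        have d1 : (Finsupp.single u 1 + ((β.update u (β u - k)).update v k) : Fin n →₀ ℕ)
            = (β.update u (β u + 1 - k)).update v k := by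
          ext x
          simp only [Finsupp.add_apply, Finsupp.single_apply, U_apply]
          split_ifs <;> (try subst_vars) <;> (try simp_all) <;> (try omega)
        have d2 : (Finsupp.single v 1 + ((β.update u (β u - k)).update v k) : Fin n →₀ ℕ)
            = (β.update u (β u + 1 - (k + 1))).update v (k + 1) := by
          ext x
          simp only [Finsupp.add_apply, Finsupp.single_apply, U_apply]
          split_ifs <;> (try subst_vars) <;> (try simp_all) <;> (try omega)
        rw [← pow_one (X u : MvPolynomial (Fin n) ℂ), ← pow_one (X v : MvPolynomial (Fin n) ℂ),
          ← monomial_single_add, ← monomial_single_add, d1, d2]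
      rw [Finset.sum_congr rfl tele,
        Finset.sum_range_sub' (fun k => monomial ((β.update u (β u + 1 - k)).update v k) c)
          (β u + 1)]
      have d3 : (β.update u (β u + 1 - 0)).update v 0
          = (Finsupp.single u 1 + β : Fin n →₀ ℕ) := by
        ext x
        simp only [Finsupp.add_apply, Finsupp.single_apply, U_apply]
        split_ifs <;> (try subst_vars) <;> (try simp_all) <;> (try omega)
      have d4 : (β.update u (β u + 1 - (β u + 1))).update v (β u + 1)
          = ((Finsupp.single u 1 + β : Fin n →₀ ℕ).update u
              ((Finsupp.single u 1 + β : Fin n →₀ ℕ) v)).update v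
              ((Finsupp.single u 1 + β : Fin n →₀ ℕ) u) := by
        ext x
        simp only [Finsupp.add_apply, Finsupp.single_apply, U_apply]
        split_ifs <;> (try subst_vars) <;> (try simp_all) <;> (try omega)
      rw [d3, d4]
    · have hcon : ¬((Finsupp.single u 1 + β : Fin n →₀ ℕ) u = 0 ∨
          (Finsupp.single u 1 + β : Fin n →₀ ℕ) v = 0) := by
        push_neg
        exact ⟨by rw [hβ'u]; omega, by rw [hβ'v]; exact hb⟩
      rw [tswapE_eq_self n i hi _ hcon]
      rw [ptMon_of_ne u v β c hb, mul_zero, sub_self]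
  | add p q hp hq =>
    rw [pt_add, mul_add, mul_add, stilde_add]
    linear_combination hp + hq

lemma X_sub_X_ne (n i : ℕ) (hi : i + 1 < n) :
    (X ⟨i, by omega⟩ - X ⟨i + 1, hi⟩ : MvPolynomial (Fin n) ℂ) ≠ 0 := by
  intro h
  have h1 : coeff (Finsupp.single (⟨i, by omega⟩ : Fin n) 1)
      (X ⟨i, by omega⟩ - X ⟨i + 1, hi⟩ : MvPolynomial (Fin n) ℂ) = 1 := by
    rw [coeff_sub, coeff_X', coeff_X', if_pos rfl,
      if_neg (by simp [Finsupp.single_eq_single_iff, Fin.ext_iff])]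
    ring
  rw [h] at h1
  simp at h1

lemma prel_unique {u v : Fin n} (i : ℕ) (hi : i + 1 < n) (hu : (u : ℕ) = i)
    (hv : (v : ℕ) = i + 1) (f g : MvPolynomial (Fin n) ℂ) (h : PRel n i hi f g) :
    g = pt u v f := by
  have hu' : u = (⟨i, by omega⟩ : Fin n) := by ext; exact hu
  have hv' : v = (⟨i + 1, hi⟩ : Fin n) := by ext; exact hv
  have h2 := prel_pt n i hi f
  unfold PRel at h h2
  have hg : g = pt (⟨i, by omega⟩ : Fin n) (⟨i + 1, hi⟩ : Fin n) f :=
    mul_left_cancel₀ (X_sub_X_ne n i hi) (h.trans h2.symm)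
  have e1 : (⟨i, by omega⟩ : Fin n) = u := Fin.ext (by simp [hu])
  have e2 : (⟨i + 1, hi⟩ : Fin n) = v := Fin.ext (by simp [hv])
  rw [hg, e1, e2]

end aux
/-- The operators `θ̃ᵢ := π̃ᵢ − 1` satisfy `θ̃ᵢ² = −θ̃ᵢ`,
`θ̃ᵢ θ̃ⱼ = θ̃ⱼ θ̃ᵢ` for `|i−j| > 1`, and the braid relations
`θ̃ᵢ θ̃ᵢ₊₁ θ̃ᵢ = θ̃ᵢ₊₁ θ̃ᵢ θ̃ᵢ₊₁`.  Throughout, `θ̃ᵢ f` is expressed as `g - f`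
where `PRel n i hi f g`. -/
theorem thetatilde_relations (n : ℕ) :
    (∀ (i : ℕ) (hi : i + 1 < n) (f g h : MvPolynomial (Fin n) ℂ),
      PRel n i hi f g → PRel n i hi (g - f) h →
      h - (g - f) = -(g - f)) ∧
    (∀ (i j : ℕ) (hi : i + 1 < n) (hj : j + 1 < n), (i + 1 < j ∨ j + 1 < i) →
      ∀ f a b a' b' : MvPolynomial (Fin n) ℂ,
      PRel n i hi f a → PRel n j hj (a - f) b →
      PRel n j hj f a' → PRel n i hi (a' - f) b' →
      b - (a - f) = b' - (a' - f)) ∧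
    (∀ (i : ℕ) (hi : i + 2 < n) (f a b c a' b' c' : MvPolynomial (Fin n) ℂ),
      PRel n i (by omega) f a → PRel n (i + 1) hi (a - f) b →
      PRel n i (by omega) (b - (a - f)) c →
      PRel n (i + 1) hi f a' → PRel n i (by omega) (a' - f) b' →
      PRel n (i + 1) hi (b' - (a' - f)) c' →
      c - (b - (a - f)) = c' - (b' - (a' - f))) := by
  refine ⟨?_, ?_, ?_⟩
  · intro i hi f g h hg hh
    obtain ⟨u, hu⟩ : ∃ u : Fin n, (u : ℕ) = i := ⟨⟨i, by omega⟩, rfl⟩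
    obtain ⟨v, hv⟩ : ∃ v : Fin n, (v : ℕ) = i + 1 := ⟨⟨i + 1, hi⟩, rfl⟩
    have huv : u ≠ v := by rw [Ne, Fin.ext_iff, hu, hv]; omega
    have hgu : g = pt u v f := prel_unique i hi hu hv f g hg
    have hhu : h = pt u v (g - f) := prel_unique i hi hu hv _ h hh
    rw [hgu] at hhu
    rw [hhu, hgu, pt_sub, pt_idem huv]
    ring
  · intro i j hi hj hij f a b a' b' ha hb ha' hb'
    obtain ⟨u, hu⟩ : ∃ u : Fin n, (u : ℕ) = i := ⟨⟨i, by omega⟩, rfl⟩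
    obtain ⟨v, hv⟩ : ∃ v : Fin n, (v : ℕ) = i + 1 := ⟨⟨i + 1, hi⟩, rfl⟩
    obtain ⟨u', hu'⟩ : ∃ u' : Fin n, (u' : ℕ) = j := ⟨⟨j, by omega⟩, rfl⟩
    obtain ⟨v', hv'⟩ : ∃ v' : Fin n, (v' : ℕ) = j + 1 := ⟨⟨j + 1, hj⟩, rfl⟩
    have huv : u ≠ v := by rw [Ne, Fin.ext_iff, hu, hv]; omega
    have hu'v' : u' ≠ v' := by rw [Ne, Fin.ext_iff, hu', hv']; omega
    have hd1 : u ≠ u' := by rw [Ne, Fin.ext_iff, hu, hu']; omega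
    have hd2 : u ≠ v' := by rw [Ne, Fin.ext_iff, hu, hv']; omega
    have hd3 : v ≠ u' := by rw [Ne, Fin.ext_iff, hv, hu']; omega
    have hd4 : v ≠ v' := by rw [Ne, Fin.ext_iff, hv, hv']; omega
    have hau : a = pt u v f := prel_unique i hi hu hv f a ha
    have ha'u : a' = pt u' v' f := prel_unique j hj hu' hv' f a' ha'
    have hbu : b = pt u' v' (a - f) := prel_unique j hj hu' hv' _ b hb
    have hb'u : b' = pt u v (a' - f) := prel_unique i hi hu hv _ b' hb'
    rw [hau] at hbu
    rw [ha'u] at hb'u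
    rw [hbu, hb'u, hau, ha'u, pt_sub, pt_sub,
      pt_comm hd1 hd2 hd3 hd4 huv hu'v' f]
    ring
  · intro i hi f a b c a' b' c' ha hb hc ha' hb' hc'
    obtain ⟨u, hu⟩ : ∃ u : Fin n, (u : ℕ) = i := ⟨⟨i, by omega⟩, rfl⟩
    obtain ⟨v, hv⟩ : ∃ v : Fin n, (v : ℕ) = i + 1 := ⟨⟨i + 1, by omega⟩, rfl⟩
    obtain ⟨w, hw⟩ : ∃ w : Fin n, (w : ℕ) = i + 2 := ⟨⟨i + 2, hi⟩, rfl⟩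
    have huv : u ≠ v := by rw [Ne, Fin.ext_iff, hu, hv]; omega
    have hvw : v ≠ w := by rw [Ne, Fin.ext_iff, hv, hw]; omega
    have huw : u ≠ w := by rw [Ne, Fin.ext_iff, hu, hw]; omega
    have hau : a = pt u v f := prel_unique i (by omega) hu hv f a ha
    have ha'u : a' = pt v w f := prel_unique (i + 1) hi hv (by omega) f a' ha'
    have hbu : b = pt v w (a - f) := prel_unique (i + 1) hi hv (by omega) _ b hb
    have hb'u : b' = pt u v (a' - f) := prel_unique i (by omega) hu hv _ b' hb'
    rw [hau] at hbu
    rw [ha'u] at hb'u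
    have hcu : c = pt u v (b - (a - f)) := prel_unique i (by omega) hu hv _ c hc
    have hc'u : c' = pt v w (b' - (a' - f)) := prel_unique (i + 1) hi hv (by omega) _ c' hc'
    rw [hbu, hau] at hcu
    rw [hb'u, ha'u] at hc'u
    rw [hcu, hc'u, hbu, hb'u, hau, ha'u]
    simp only [pt_sub]
    rw [pt_idem huv, pt_idem hvw, pt_braid huv hvw huw]
    ring
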